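/- arXiv:1311.0596 — 2 statements merged into one kernel-verified Lean document; each statement's English description precedes it below -/
import Mathlib

section
/- Let ψ(x) = Σ_{k≥0} γ_k x^k/k! be a real entire function in the Laguerre–Pólya class with ψ(0) ≠ 0 and Appell polynomials A_n(ψ;x) = Σ_{j=0}^{n} C(n,j) γ_j x^{n−j}. Then the functions x ↦ (x/n)^n A_n(ψ; n/x) extend to polynomials in x that converge to ψ(x) uniformly on compact subsets of ℂ. -/
open Filter Finset Topology


/-- The Laguerre–Pólya class: `ψ(x) = c x^m e^{-ax² + bx} ∏_k (1 + x/x_k) e^{-x/x_k}`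
with `c, b, x_k` real, `a ≥ 0`, `m` a nonnegative integer, the product over a finite or
countable family of nonzero reals `x_k` with `Σ x_k⁻² < ∞`. -/
def IsLaguerrePolya (ψ : ℂ → ℂ) : Prop :=
  ∃ (ι : Type) (_ : Countable ι) (c b a : ℝ) (mdeg : ℕ) (x : ι → ℝ),
    0 ≤ a ∧ (∀ k, x k ≠ 0) ∧ Summable (fun k => ((x k) ^ 2)⁻¹) ∧
    (∀ z : ℂ,
      Multipliable (fun k : ι => (1 + z / (x k)) * Complex.exp (-(z / (x k))))) ∧
    (∀ z : ℂ, ψ z = (c : ℂ) * z ^ mdeg *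
      Complex.exp (-(a : ℂ) * z ^ 2 + (b : ℂ) * z) *
      ∏' k : ι, (1 + z / (x k)) * Complex.exp (-(z / (x k))))

/-- The `n`-th Jensen polynomial `g_n(ψ; x) = Σ_{j=0}^n (n choose j) γ_j x^j` of a real
entire function with Maclaurin coefficients `γ_k` (so `ψ(x) = Σ γ_k x^k / k!`). -/
noncomputable def jensenPoly (γ : ℕ → ℝ) (n : ℕ) (x : ℂ) : ℂ :=
  ∑ j ∈ Finset.range (n + 1), (n.choose j : ℂ) * (γ j : ℂ) * x ^ j

/-- The `n`-th Appell polynomial `A_n(ψ; x) = Σ_{j=0}^n (n choose j) γ_j x^{n-j}`. -/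
noncomputable def appellPoly (γ : ℕ → ℝ) (n : ℕ) (x : ℂ) : ℂ :=
  ∑ j ∈ Finset.range (n + 1), (n.choose j : ℂ) * (γ j : ℂ) * x ^ (n - j)


/-- Coefficient `C(n,j)/n^j` (and `0` for `j > n`). -/
noncomputable def stmt8coef (n j : ℕ) : ℝ :=
  if j ≤ n then (n.choose j : ℝ) / (n : ℝ) ^ j else 0

lemma stmt8coef_abs_le (n j : ℕ) : |stmt8coef n j| ≤ ((j.factorial : ℝ))⁻¹ := by
  unfold stmt8coef
  split
  · next hj =>
    rcases Nat.eq_zero_or_pos n with rfl | hn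
    · interval_cases j
      norm_num
    · have hpow : (0:ℝ) < (n:ℝ) ^ j := by positivity
      rw [abs_of_nonneg (by positivity)]
      rw [div_le_iff₀ hpow, inv_mul_eq_div, le_div_iff₀ (by positivity)]
      have : n.choose j * j.factorial ≤ n ^ j := by
        have h1 : j.factorial * n.choose j = n.descFactorial j :=
          (Nat.descFactorial_eq_factorial_mul_choose n j).symm
        calc n.choose j * j.factorial = n.descFactorial j := by rw [mul_comm, h1]
          _ ≤ n ^ j := Nat.descFactorial_le_pow n j
      exact_mod_cast this
  · simp

lemma stmt8coef_tendsto (j : ℕ) :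
    Tendsto (fun n : ℕ => stmt8coef n j) atTop (𝓝 ((j.factorial : ℝ)⁻¹)) := by
  have h1 : Tendsto (fun n : ℕ => (∏ i ∈ range j, (1 - (i : ℝ) / n)) * (j.factorial : ℝ)⁻¹)
      atTop (𝓝 ((j.factorial : ℝ)⁻¹)) := by
    have hp : Tendsto (fun n : ℕ => ∏ i ∈ range j, (1 - (i : ℝ) / n)) atTop (𝓝 1) := by
      have := tendsto_finset_prod (f := fun (i : ℕ) (n : ℕ) => 1 - (i : ℝ) / n)
        (x := atTop) (a := fun _ => (1:ℝ)) (range j) (fun i _ => by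
          simpa using tendsto_const_nhds.sub (tendsto_const_div_atTop_nhds_zero_nat (i : ℝ)))
      simpa using this
    simpa using hp.mul_const _
  refine h1.congr' ?_
  filter_upwards [eventually_ge_atTop (max j 1)] with n hn
  have hj : j ≤ n := le_trans (le_max_left _ _) hn
  have hn1 : 1 ≤ n := le_trans (le_max_right _ _) hn
  have hn0 : (n : ℝ) ≠ 0 := by positivity
  have hdesc : (n.descFactorial j : ℝ) = ∏ i ∈ range j, ((n : ℝ) - i) := by
    rw [Nat.descFactorial_eq_prod_range, Nat.cast_prod]
    refine prod_congr rfl fun i hi => ?_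
    rw [Nat.cast_sub (le_trans (mem_range.1 hi).le hj)]
  have hc : (n.choose j : ℝ) = (∏ i ∈ range j, ((n : ℝ) - i)) / j.factorial := by
    rw [← hdesc, Nat.descFactorial_eq_factorial_mul_choose]
    push_cast
    field_simp
  have hprod : ∏ i ∈ range j, (1 - (i : ℝ) / n) = (∏ i ∈ range j, ((n : ℝ) - i)) / (n : ℝ) ^ j := by
    rw [show (n:ℝ) ^ j = ∏ _i ∈ range j, (n:ℝ) by simp, ← prod_div_distrib]
    refine prod_congr rfl fun i _ => ?_
    field_simp
  unfold stmt8coef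
  rw [if_pos hj, hc, hprod]
  ring

/-- The polynomial `Σ_{j≤n} C(n,j) γ_j x^j / n^j`. -/
noncomputable def stmt8Q (γ : ℕ → ℝ) (n : ℕ) : Polynomial ℂ :=
  ∑ j ∈ Finset.range (n + 1),
    Polynomial.C ((stmt8coef n j : ℂ) * (γ j : ℂ)) * Polynomial.X ^ j

lemma stmt8Q_eval (γ : ℕ → ℝ) (n : ℕ) (x : ℂ) :
    (stmt8Q γ n).eval x = ∑ j ∈ Finset.range (n + 1), (stmt8coef n j : ℂ) * (γ j : ℂ) * x ^ j := by
  simp [stmt8Q, Polynomial.eval_finset_sum]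

lemma stmt8Q_eval_tsum (γ : ℕ → ℝ) (n : ℕ) (x : ℂ) :
    (stmt8Q γ n).eval x = ∑' j : ℕ, (stmt8coef n j : ℂ) * (γ j : ℂ) * x ^ j := by
  rw [stmt8Q_eval]
  refine (tsum_eq_sum ?_).symm
  intro j hj
  have : ¬ j ≤ n := by
    simpa [Nat.lt_succ_iff] using hj
  simp [stmt8coef, this]

/-- If `ψ(x) = Σ γ_k x^k / k!` is a real entire function in the
Laguerre–Pólya class with `ψ(0) ≠ 0`, then the functions `x ↦ (x/n)^n A_n(ψ; n/x)`
extend to polynomials in `x` converging to `ψ` uniformly on compact subsets of `ℂ`. -/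
theorem statement8
    (γ : ℕ → ℝ) (ψ : ℂ → ℂ)
    (hψ : ∀ z : ℂ, HasSum (fun k : ℕ => (γ k : ℂ) * z ^ k / (Nat.factorial k : ℂ)) (ψ z))
    (h0 : ψ 0 ≠ 0)
    (hLP : IsLaguerrePolya ψ) :
    ∃ Q : ℕ → Polynomial ℂ,
      (∀ n : ℕ, 1 ≤ n → ∀ x : ℂ, x ≠ 0 →
        (Q n).eval x = (x / n) ^ n * appellPoly γ n ((n : ℂ) / x)) ∧
      TendstoLocallyUniformly (fun n : ℕ => fun x : ℂ => (Q n).eval x)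
        ψ Filter.atTop := by
  refine ⟨stmt8Q γ, fun n hn x hx => ?_, ?_⟩
  · have hn0 : (n : ℂ) ≠ 0 := Nat.cast_ne_zero.2 (by omega)
    rw [stmt8Q_eval]
    unfold appellPoly
    rw [Finset.mul_sum]
    refine Finset.sum_congr rfl fun j hj => ?_
    have hjn : j ≤ n := by simpa [Nat.lt_succ_iff] using Finset.mem_range.1 hj
    have e1 : (x / n) ^ n * ((n : ℂ) / x) ^ (n - j) = x ^ j / (n : ℂ) ^ j := by
      rw [div_pow, div_pow, div_mul_div_comm,
        show (x : ℂ) ^ n = x ^ (n - j) * x ^ j from (pow_sub_mul_pow x hjn).symm,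
        show ((n : ℂ)) ^ n = (n : ℂ) ^ (n - j) * (n : ℂ) ^ j from (pow_sub_mul_pow _ hjn).symm]
      rw [div_eq_div_iff (mul_ne_zero (mul_ne_zero (pow_ne_zero _ hn0) (pow_ne_zero _ hn0))
        (pow_ne_zero _ hx)) (pow_ne_zero _ hn0)]
      ring
    calc (stmt8coef n j : ℂ) * (γ j : ℂ) * x ^ j
        = (n.choose j : ℂ) * (γ j : ℂ) * (x ^ j / (n : ℂ) ^ j) := by
          simp only [stmt8coef, if_pos hjn]
          push_cast
          ring
      _ = (x / n) ^ n * ((n.choose j : ℂ) * (γ j : ℂ) * ((n : ℂ) / x) ^ (n - j)) := by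
          rw [← e1]; ring
  · rw [tendstoLocallyUniformly_iff_forall_isCompact]
    intro K hK
    obtain ⟨r0, hKr0⟩ := hK.isBounded.subset_closedBall 0
    set r : ℝ := max r0 0 with hr
    have hr0 : 0 ≤ r := le_max_right _ _
    have hKr : K ⊆ Metric.closedBall 0 r :=
      hKr0.trans (Metric.closedBall_subset_closedBall (le_max_left _ _))
    -- summability of the majorant
    have hsumM : Summable (fun j : ℕ => |γ j| * r ^ j / j.factorial) := by
      have h1 : Summable (fun j : ℕ => ‖(γ j : ℂ) * (r : ℂ) ^ j / (j.factorial : ℂ)‖) :=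
        summable_norm_iff.mpr (hψ r).summable
      refine h1.congr fun j => ?_
      simp [norm_div, norm_mul, abs_of_nonneg hr0, Complex.norm_natCast,
        Complex.norm_real, ← Complex.ofReal_pow]
    have hg : Summable (fun j : ℕ => 2 * (|γ j| * r ^ j / j.factorial)) := hsumM.mul_left 2
    -- the uniform error bound tends to 0
    have hs : Tendsto (fun n : ℕ =>
        ∑' j : ℕ, |stmt8coef n j - (j.factorial : ℝ)⁻¹| * (|γ j| * r ^ j))
        atTop (𝓝 0) := by
      have := tendsto_tsum_of_dominated_convergence (𝓕 := atTop)
        (f := fun n j => |stmt8coef n j - (j.factorial : ℝ)⁻¹| * (|γ j| * r ^ j))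
        (g := fun _ => (0 : ℝ))
        (bound := fun j => 2 * (|γ j| * r ^ j / j.factorial)) hg
        (fun j => by
          have h1 : Tendsto (fun n : ℕ => stmt8coef n j - (j.factorial : ℝ)⁻¹) atTop (𝓝 0) := by
            simpa using (stmt8coef_tendsto j).sub_const ((j.factorial : ℝ)⁻¹)
          simpa using ((h1.abs.congr fun n => rfl).mul_const (|γ j| * r ^ j)))
        (Filter.Eventually.of_forall fun n j => by
          have hb : |stmt8coef n j - (j.factorial : ℝ)⁻¹| ≤ 2 * (j.factorial : ℝ)⁻¹ := by
            calc |stmt8coef n j - (j.factorial : ℝ)⁻¹|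
                ≤ |stmt8coef n j| + |((j.factorial : ℝ)⁻¹)| := abs_sub _ _
              _ ≤ (j.factorial : ℝ)⁻¹ + (j.factorial : ℝ)⁻¹ := by
                  have := stmt8coef_abs_le n j
                  have h2 : |((j.factorial : ℝ)⁻¹)| = (j.factorial : ℝ)⁻¹ :=
                    abs_of_nonneg (by positivity)
                  linarith
              _ = 2 * (j.factorial : ℝ)⁻¹ := by ring
          have hnn : (0:ℝ) ≤ |γ j| * r ^ j := by positivity
          calc ‖|stmt8coef n j - (j.factorial : ℝ)⁻¹| * (|γ j| * r ^ j)‖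
              = |stmt8coef n j - (j.factorial : ℝ)⁻¹| * (|γ j| * r ^ j) := by
                rw [Real.norm_eq_abs, abs_of_nonneg (by positivity)]
            _ ≤ 2 * (j.factorial : ℝ)⁻¹ * (|γ j| * r ^ j) := by
                exact mul_le_mul_of_nonneg_right hb hnn
            _ = 2 * (|γ j| * r ^ j / j.factorial) := by ring)
      simpa using this
    rw [Metric.tendstoUniformlyOn_iff]
    intro ε hε
    filter_upwards [hs.eventually (gt_mem_nhds hε)] with n hsn x hxK
    have hxr : ‖x‖ ≤ r := by simpa using hKr hxK
    -- pointwise bound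
    set t : ℕ → ℂ := fun j => ((stmt8coef n j - (j.factorial : ℝ)⁻¹ : ℝ) : ℂ) * (γ j : ℂ) * x ^ j
      with ht
    have hsum1 : Summable (fun j : ℕ => (stmt8coef n j : ℂ) * (γ j : ℂ) * x ^ j) := by
      apply summable_of_ne_finset_zero (s := Finset.range (n + 1))
      intro j hj
      have : ¬ j ≤ n := by simpa [Nat.lt_succ_iff] using hj
      simp [stmt8coef, this]
    have hsum2 : Summable (fun j : ℕ => (γ j : ℂ) * x ^ j / (j.factorial : ℂ)) := (hψ x).summable
    have hdiff : (stmt8Q γ n).eval x - ψ x = ∑' j : ℕ, t j := by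
      rw [stmt8Q_eval_tsum, ← (hψ x).tsum_eq, ← Summable.tsum_sub hsum1 hsum2]
      refine tsum_congr fun j => ?_
      simp only [ht]
      push_cast
      ring
    have htnorm : ∀ j, ‖t j‖ ≤ |stmt8coef n j - (j.factorial : ℝ)⁻¹| * (|γ j| * r ^ j) := by
      intro j
      simp only [ht, norm_mul, Complex.norm_real, norm_pow, Real.norm_eq_abs]
      have : ‖x‖ ^ j ≤ r ^ j := pow_le_pow_left₀ (norm_nonneg x) hxr j
      calc |stmt8coef n j - (j.factorial : ℝ)⁻¹| * |γ j| * ‖x‖ ^ j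
          ≤ |stmt8coef n j - (j.factorial : ℝ)⁻¹| * |γ j| * r ^ j := by
            have h9 : (0:ℝ) ≤ |stmt8coef n j - (j.factorial : ℝ)⁻¹| * |γ j| := by positivity
            exact mul_le_mul_of_nonneg_left ‹‖x‖ ^ j ≤ r ^ j› h9
        _ = |stmt8coef n j - (j.factorial : ℝ)⁻¹| * (|γ j| * r ^ j) := by ring
    have hsumTnorm : Summable (fun j => ‖t j‖) := by
      refine Summable.of_nonneg_of_le (fun j => norm_nonneg _) htnorm ?_
      refine Summable.of_nonneg_of_le (fun j => by positivity) ?_ hg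
      intro j
      have hb : |stmt8coef n j - (j.factorial : ℝ)⁻¹| ≤ 2 * (j.factorial : ℝ)⁻¹ := by
        calc |stmt8coef n j - (j.factorial : ℝ)⁻¹|
            ≤ |stmt8coef n j| + |((j.factorial : ℝ)⁻¹)| := abs_sub _ _
          _ ≤ 2 * (j.factorial : ℝ)⁻¹ := by
              have := stmt8coef_abs_le n j
              have h2 : |((j.factorial : ℝ)⁻¹)| = (j.factorial : ℝ)⁻¹ :=
                abs_of_nonneg (by positivity)
              linarith
      calc |stmt8coef n j - (j.factorial : ℝ)⁻¹| * (|γ j| * r ^ j)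
          ≤ 2 * (j.factorial : ℝ)⁻¹ * (|γ j| * r ^ j) :=
            mul_le_mul_of_nonneg_right hb (by positivity)
        _ = 2 * (|γ j| * r ^ j / j.factorial) := by ring
    have hdistle : dist (ψ x) ((stmt8Q γ n).eval x)
        ≤ ∑' j : ℕ, |stmt8coef n j - (j.factorial : ℝ)⁻¹| * (|γ j| * r ^ j) := by
      rw [dist_comm, dist_eq_norm, hdiff]
      calc ‖∑' j : ℕ, t j‖ ≤ ∑' j : ℕ, ‖t j‖ := norm_tsum_le_tsum_norm hsumTnorm
        _ ≤ _ := by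
            refine Summable.tsum_le_tsum htnorm hsumTnorm ?_
            refine Summable.of_nonneg_of_le (fun j => by positivity) ?_ hg
            intro j
            have hb : |stmt8coef n j - (j.factorial : ℝ)⁻¹| ≤ 2 * (j.factorial : ℝ)⁻¹ := by
              calc |stmt8coef n j - (j.factorial : ℝ)⁻¹|
                  ≤ |stmt8coef n j| + |((j.factorial : ℝ)⁻¹)| := abs_sub _ _
                _ ≤ 2 * (j.factorial : ℝ)⁻¹ := by
                    have := stmt8coef_abs_le n j
                    have h2 : |((j.factorial : ℝ)⁻¹)| = (j.factorial : ℝ)⁻¹ :=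
                      abs_of_nonneg (by positivity)
                    linarith
            calc |stmt8coef n j - (j.factorial : ℝ)⁻¹| * (|γ j| * r ^ j)
                ≤ 2 * (j.factorial : ℝ)⁻¹ * (|γ j| * r ^ j) :=
                  mul_le_mul_of_nonneg_right hb (by positivity)
              _ = 2 * (|γ j| * r ^ j / j.factorial) := by ring
    exact lt_of_le_of_lt hdistle hsn
end

section
/- Let (m_k)_{k≥0} be a moment sequence with all Hankel determinants D_n > 0, μ the corresponding positive Borel measure, (p_n) its orthonormal polynomials given by p_n(x) = (D_{n−1} D_n)^{−1/2} D_n(x), and q_n(z) = Σ_{j=0}^{n} C(n,j) m_j (−z)^{n−j}. Then for every n ≥ 1, (−1)^n q_n(z) = (√(m_0 D_n) / C_n) · W(p_1,…,p_n; z), where C_n = ∏_{k=1}^{n−1} k!. -/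
open MeasureTheory Polynomial

/-- Determinant of the `(n+1) × (n+1)` Hankel matrix with `(j,ℓ)` entry `m (j + ℓ)`. -/
noncomputable def hankelDet (m : ℕ → ℝ) (n : ℕ) : ℝ :=
  (Matrix.of fun i j : Fin (n + 1) => m (i.1 + j.1)).det

/-- `C_n = ∏_{k=1}^{n-1} k!` (equivalently `∏_{k=0}^{n-1} k!`). -/
noncomputable def bigC (n : ℕ) : ℝ :=
  ∏ k ∈ Finset.range n, (Nat.factorial k : ℝ)

/-- Wronskian of a tuple of real polynomials, as a polynomial: `det (f_j^{(i-1)})`. -/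
noncomputable def polyWronskianR {n : ℕ} (f : Fin n → Polynomial ℝ) : Polynomial ℝ :=
  (Matrix.of fun i j : Fin n => Polynomial.derivative^[i.1] (f j)).det

/-- The polynomial `D_n(z)`: determinant of the `(n+1) × (n+1)` matrix whose rows
`i = 0, …, n-1` are `(m_i, m_{i+1}, …, m_{i+n})` and whose last row is
`(1, z, …, z^n)`. -/
noncomputable def DPoly (m : ℕ → ℝ) (n : ℕ) : Polynomial ℝ :=
  (Matrix.of fun i j : Fin (n + 1) =>
    if (i : ℕ) < n then Polynomial.C (m (i.1 + j.1)) else Polynomial.X ^ (j : ℕ)).det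

/-- `q_n(z) = Σ_{j=0}^n (n choose j) m_j (−z)^{n−j}`. -/
noncomputable def qPoly (m : ℕ → ℝ) (n : ℕ) : Polynomial ℝ :=
  ∑ j ∈ Finset.range (n + 1),
    Polynomial.C ((n.choose j : ℝ) * m j) * (-Polynomial.X) ^ (n - j)

open Finset

set_option maxHeartbeats 1000000


noncomputable def LmHom (m : ℕ → ℝ) : Polynomial ℝ →+ ℝ where
  toFun f := f.sum fun k c => c * m k
  map_zero' := Polynomial.sum_zero_index _
  map_add' f g := Polynomial.sum_add_index f g (fun k c => c * m k) (by intro i; simp) (by intros; ring)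

lemma Lm_monomial (m : ℕ → ℝ) (k : ℕ) (c : ℝ) :
    LmHom m (Polynomial.monomial k c) = c * m k := by
  simp [LmHom]

lemma Lm_shift (m : ℕ → ℝ) (i : ℕ) (f : Polynomial ℝ) (d : ℕ) (hf : f.natDegree ≤ d) :
    LmHom m (X ^ i * f) = ∑ ℓ ∈ range (d + 1), f.coeff ℓ * m (i + ℓ) := by
  conv_lhs => rw [f.as_sum_range' (d+1) (Nat.lt_succ_of_le hf)]
  rw [Finset.mul_sum, map_sum]
  refine Finset.sum_congr rfl fun ℓ _ => ?_
  rw [show (X:Polynomial ℝ)^i * monomial ℓ (f.coeff ℓ) = monomial (i+ℓ) (f.coeff ℓ) by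
    rw [X_pow_mul, monomial_mul_X_pow, add_comm], Lm_monomial]

lemma Lm_expand (m : ℕ → ℝ) (f : Polynomial ℝ) (d : ℕ) (hf : f.natDegree ≤ d) :
    LmHom m f = ∑ ℓ ∈ range (d + 1), f.coeff ℓ * m ℓ := by
  have := Lm_shift m 0 f d hf
  simpa using this

lemma Lm_Cmul (m : ℕ → ℝ) (c : ℝ) (f : Polynomial ℝ) :
    LmHom m (C c * f) = c * LmHom m f := by
  conv_lhs => rw [f.as_sum_range' (f.natDegree + 1) (Nat.lt_succ_self _)]
  rw [Finset.mul_sum, map_sum, Lm_expand m f f.natDegree le_rfl, Finset.mul_sum]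
  refine Finset.sum_congr rfl fun ℓ _ => ?_
  rw [C_mul_monomial, Lm_monomial]; ring

lemma Lm_mul_expand (m : ℕ → ℝ) (g h : Polynomial ℝ) (N : ℕ) (hg : g.natDegree ≤ N) :
    ∑ i ∈ range (N + 1), g.coeff i * LmHom m (X ^ i * h) = LmHom m (g * h) := by
  conv_rhs => rw [g.as_sum_range' (N+1) (Nat.lt_succ_of_le hg)]
  rw [Finset.sum_mul, map_sum]
  refine Finset.sum_congr rfl fun i _ => ?_
  rw [← C_mul_X_pow_eq_monomial, mul_assoc, Lm_Cmul]

noncomputable def hminor (μ : ℕ → ℝ) (j : ℕ) (ℓ : Fin (j+1)) : Matrix (Fin j) (Fin j) ℝ :=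
  Matrix.of fun a b => μ (a.1 + (ℓ.succAbove b).1)

lemma DPoly_expand (μ : ℕ → ℝ) (j : ℕ) :
    DPoly μ j = ∑ ℓ : Fin (j+1), C ((-1)^(j+ℓ.1) * (hminor μ j ℓ).det) * X ^ ℓ.1 := by
  rw [DPoly, Matrix.det_succ_row _ (Fin.last j)]
  refine Finset.sum_congr rfl fun ℓ _ => ?_
  have h1 : (Matrix.of fun i j' : Fin (j + 1) =>
      if (i : ℕ) < j then Polynomial.C (μ (i.1 + j'.1)) else Polynomial.X ^ (j' : ℕ)).submatrix
      (Fin.last j).succAbove ℓ.succAbove = C.mapMatrix (hminor μ j ℓ) := by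
    ext a b
    simp [Matrix.submatrix_apply, Fin.succAbove_last, hminor, a.2, RingHom.mapMatrix_apply,
      Matrix.map_apply]
  rw [h1, ← RingHom.map_det]
  simp [Fin.val_last, Matrix.of_apply, map_mul, map_pow, map_neg, map_one]

lemma DPoly_coeff (μ : ℕ → ℝ) (j k : ℕ) :
    (DPoly μ j).coeff k =
      if h : k < j+1 then (-1)^(j+k) * (hminor μ j ⟨k, h⟩).det else 0 := by
  rw [DPoly_expand, finset_sum_coeff]
  simp only [coeff_C_mul, coeff_X_pow]
  split
  · next h =>
    rw [Finset.sum_eq_single (⟨k, h⟩ : Fin (j+1))]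
    · simp
    · intro ℓ _ hne
      have : ¬ (k = ℓ.1) := fun hc => hne (Fin.ext hc.symm)
      simp [this]
    · simp
  · next h =>
    apply Finset.sum_eq_zero
    intro ℓ _
    have : ¬ (k = ℓ.1) := fun hc => h (hc ▸ ℓ.2)
    simp [this]

lemma DPoly_natDegree_le (μ : ℕ → ℝ) (j : ℕ) : (DPoly μ j).natDegree ≤ j := by
  refine Polynomial.natDegree_le_iff_coeff_eq_zero.mpr fun k hk => ?_
  rw [DPoly_coeff, dif_neg (by omega)]

lemma DPoly_orth (μ : ℕ → ℝ) (j i : ℕ) :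
    LmHom μ (X ^ i * DPoly μ j) =
      (Matrix.of fun a b : Fin (j+1) =>
        if (a : ℕ) < j then μ (a.1 + b.1) else μ (i + b.1)).det := by
  rw [Lm_shift μ i _ j (DPoly_natDegree_le μ j)]
  rw [Matrix.det_succ_row _ (Fin.last j)]
  rw [← Fin.sum_univ_eq_sum_range (fun ℓ => (DPoly μ j).coeff ℓ * μ (i + ℓ))]
  refine Finset.sum_congr rfl fun ℓ _ => ?_
  have h1 : (Matrix.of fun a b : Fin (j + 1) =>
      if (a : ℕ) < j then μ (a.1 + b.1) else μ (i + b.1)).submatrix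
      (Fin.last j).succAbove ℓ.succAbove = hminor μ j ℓ := by
    ext a b
    simp [Matrix.submatrix_apply, Fin.succAbove_last, hminor, a.2]
  rw [h1, DPoly_coeff, dif_pos ℓ.2]
  simp [Fin.val_last]
  ring

lemma orth_lt (μ : ℕ → ℝ) (j i : ℕ) (h : i < j) : LmHom μ (X ^ i * DPoly μ j) = 0 := by
  rw [DPoly_orth]
  apply Matrix.det_zero_of_row_eq (i := (⟨i, by omega⟩ : Fin (j+1))) (j := Fin.last j)
  · intro hc
    have := congrArg Fin.val hc
    simp [Fin.val_last] at this; omega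
  · funext b
    simp [Fin.val_last, h]

lemma orth_self (μ : ℕ → ℝ) (j : ℕ) : LmHom μ (X ^ j * DPoly μ j) = hankelDet μ j := by
  rw [DPoly_orth, hankelDet]
  congr 1
  ext a b
  by_cases h : (a : ℕ) < j
  · simp [h]
  · have : (a : ℕ) = j := by omega
    simp [h, this]

lemma DPoly_leadCoeff (μ : ℕ → ℝ) (j : ℕ) :
    (DPoly μ (j+1)).coeff (j+1) = hankelDet μ j := by
  rw [DPoly_coeff, dif_pos (by omega)]
  have h1 : (⟨j+1, by omega⟩ : Fin (j+2)) = Fin.last (j+1) := rfl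
  have h2 : hminor μ (j+1) (Fin.last (j+1)) = Matrix.of fun a b : Fin (j+1) => μ (a.1 + b.1) := by
    ext a b; simp [hminor, Fin.succAbove_last]
  rw [h1, h2]
  have : (-1 : ℝ)^(j+1+(j+1)) = 1 := by
    rw [show j+1+(j+1) = 2*(j+1) by ring, pow_mul]; norm_num
  rw [this, one_mul, hankelDet]

lemma DPoly_zero (μ : ℕ → ℝ) : DPoly μ 0 = 1 := by
  rw [DPoly, Matrix.det_fin_one]
  simp

lemma natDegree_XsubC_pow (z : ℝ) (b : ℕ) : ((X - C z)^b).natDegree = b := by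
  simp [natDegree_pow]

lemma coeff_XsubC_pow_self (z : ℝ) (b : ℕ) : ((X - C z)^b).coeff b = 1 := by
  have h := ((monic_X_sub_C z).pow b).coeff_natDegree
  rwa [natDegree_XsubC_pow] at h

lemma coeff_XsubC_pow_zero (z : ℝ) (b i : ℕ) (h : b < i) : ((X - C z)^b).coeff i = 0 :=
  coeff_eq_zero_of_natDegree_lt (by rw [natDegree_XsubC_pow]; exact h)

lemma sumLm (m : ℕ → ℝ) (z : ℝ) (N a b : ℕ) (ha : a ≤ N) (hb : b ≤ N) :
    (∑ i : Fin (N+1), ((X - C z)^a).coeff i.1 * LmHom m (X^(i.1) * (X - C z)^b)) =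
      LmHom m ((X - C z)^(a+b)) :=
  calc (∑ i : Fin (N+1), ((X - C z)^a).coeff i.1 * LmHom m (X^(i.1) * (X - C z)^b))
      = ∑ i ∈ Finset.range (N+1), ((X - C z)^a).coeff i * LmHom m (X^i * (X - C z)^b) :=
        Fin.sum_univ_eq_sum_range
          (fun i => ((X - C z)^a).coeff i * LmHom m (X^i * (X - C z)^b)) (N+1)
    _ = LmHom m ((X - C z)^a * (X - C z)^b) :=
        Lm_mul_expand m _ _ N (by rw [natDegree_XsubC_pow]; omega)
    _ = LmHom m ((X - C z)^(a+b)) := by rw [← pow_add]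

lemma sumLm' (m : ℕ → ℝ) (z : ℝ) (N i b : ℕ) (hb : b ≤ N) :
    (∑ ℓ : Fin (N+1), m (i + ℓ.1) * ((X - C z)^b).coeff ℓ.1) =
      LmHom m (X^i * (X - C z)^b) :=
  calc (∑ ℓ : Fin (N+1), m (i + ℓ.1) * ((X - C z)^b).coeff ℓ.1)
      = ∑ ℓ : Fin (N+1), ((X - C z)^b).coeff ℓ.1 * m (i + ℓ.1) :=
        Finset.sum_congr rfl fun ℓ _ => mul_comm _ _
    _ = ∑ ℓ ∈ Finset.range (N+1), ((X - C z)^b).coeff ℓ * m (i + ℓ) :=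
        Fin.sum_univ_eq_sum_range (fun ℓ => ((X - C z)^b).coeff ℓ * m (i + ℓ)) (N+1)
    _ = LmHom m (X^i * (X - C z)^b) :=
        (Lm_shift m i _ N (by rw [natDegree_XsubC_pow]; omega)).symm

lemma shiftHankel (m : ℕ → ℝ) (z : ℝ) (k : ℕ) :
    hankelDet (fun j => LmHom m ((X - C z)^j)) k = hankelDet m k := by
  set U : Matrix (Fin (k+1)) (Fin (k+1)) ℝ :=
    Matrix.of fun i a : Fin (k+1) => ((X - C z)^(a:ℕ)).coeff i.1 with hU
  set H : Matrix (Fin (k+1)) (Fin (k+1)) ℝ :=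
    Matrix.of fun i j : Fin (k+1) => m (i.1 + j.1) with hH
  have hdetU : U.det = 1 := by
    rw [Matrix.det_of_upperTriangular]
    · rw [Finset.prod_eq_one]; intro i _
      simp [hU, coeff_XsubC_pow_self]
    · intro i j hij
      have hij' : (j:ℕ) < (i:ℕ) := hij
      exact coeff_XsubC_pow_zero z _ _ hij'
  have hHU : ∀ (i b : Fin (k+1)), (H * U) i b =
      LmHom m (X^(i:ℕ) * (X - C z)^(b:ℕ)) := by
    intro i b
    rw [Matrix.mul_apply]
    exact sumLm' m z k i.1 b.1 (by omega)
  have key : U.transpose * (H * U) =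
      Matrix.of fun a b : Fin (k+1) => LmHom m ((X - C z)^((a:ℕ)+(b:ℕ))) := by
    ext a b
    rw [Matrix.mul_apply]
    refine (Finset.sum_congr rfl fun i _ => ?_).trans
      (sumLm m z k a.1 b.1 (by omega) (by omega))
    rw [hHU, Matrix.transpose_apply]
    rfl
  have h3 : hankelDet (fun j => LmHom m ((X - C z)^j)) k = (U.transpose * (H * U)).det := by
    rw [key]; rfl
  rw [h3, Matrix.det_mul, Matrix.det_mul, Matrix.det_transpose, hdetU, hankelDet, ← hH]
  ring

lemma shiftDPoly (m : ℕ → ℝ) (z : ℝ) (n : ℕ) :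
    DPoly (fun j => LmHom m ((X - C z)^j)) n = Polynomial.taylor z (DPoly m n) := by
  classical
  set φ : Polynomial ℝ →+* Polynomial ℝ := eval₂RingHom C (X + C z) with hφdef
  have htay : Polynomial.taylor z (DPoly m n) = φ (DPoly m n) := by
    rw [taylor_apply, Polynomial.comp]; rfl
  set Dmat : Matrix (Fin (n+1)) (Fin (n+1)) (Polynomial ℝ) :=
    Matrix.of fun i j : Fin (n + 1) =>
      if (i : ℕ) < n then Polynomial.C (m (i.1 + j.1)) else Polynomial.X ^ (j : ℕ) with hDmat
  have hDet : φ (DPoly m n) = (φ.mapMatrix Dmat).det := by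
    rw [DPoly, RingHom.map_det]
  set A' : Matrix (Fin (n+1)) (Fin (n+1)) (Polynomial ℝ) := φ.mapMatrix Dmat with hA'
  have hA'entry : ∀ i j : Fin (n+1), A' i j =
      if (i : ℕ) < n then Polynomial.C (m (i.1 + j.1)) else (X + C z) ^ (j : ℕ) := by
    intro i j
    simp only [hA', RingHom.mapMatrix_apply, Matrix.map_apply, hDmat, Matrix.of_apply]
    split <;> simp [hφdef]
  set T : Matrix (Fin (n+1)) (Fin (n+1)) (Polynomial ℝ) :=
    Matrix.of fun a i : Fin (n+1) =>
      if (a:ℕ) < n then C (((X - C z)^(a:ℕ)).coeff i.1)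
      else (if i = a then 1 else 0) with hT
  set U' : Matrix (Fin (n+1)) (Fin (n+1)) (Polynomial ℝ) :=
    Matrix.of fun ℓ b : Fin (n+1) => C (((X - C z)^(b:ℕ)).coeff ℓ.1) with hU'
  have hdetT : T.det = 1 := by
    rw [Matrix.det_of_lowerTriangular T]
    · rw [Finset.prod_eq_one]; intro a _
      by_cases ha : (a:ℕ) < n <;> simp [hT, ha, coeff_XsubC_pow_self]
    · intro i j hij
      have hij' : (i:ℕ) < (j:ℕ) := by simpa using hij
      by_cases hi : (i:ℕ) < n
      · simp [hT, hi, coeff_XsubC_pow_zero z _ _ hij']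
      · have hne : ¬ (j = i) := by intro hc; subst hc; omega
        simp [hT, hi, hne]
  have hdetU' : U'.det = 1 := by
    rw [Matrix.det_of_upperTriangular]
    · rw [Finset.prod_eq_one]; intro i _
      simp [hU', coeff_XsubC_pow_self]
    · intro i j hij
      have hij' : (j:ℕ) < (i:ℕ) := hij
      simp [hU', coeff_XsubC_pow_zero z _ _ hij']
  have hcomp : ∀ b : ℕ, b ≤ n → (∑ ℓ : Fin (n+1),
      (X + C z) ^ (ℓ:ℕ) * C (((X - C z)^b).coeff ℓ.1)) = X ^ b := by
    intro b hb
    have h1 : (((X - C z)^b).comp (X + C z)) = X ^ b := by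
      rw [pow_comp, sub_comp, X_comp, C_comp, add_sub_cancel_right]
    have h2 : (((X - C z)^b).comp (X + C z)) =
        ∑ ℓ ∈ Finset.range (n+1), (X + C z) ^ ℓ * C (((X - C z)^b).coeff ℓ) := by
      conv_lhs => rw [as_sum_range' ((X - C z)^b) (n+1)
        (by rw [natDegree_XsubC_pow]; omega)]
      rw [Polynomial.sum_comp]
      refine Finset.sum_congr rfl fun ℓ _ => ?_
      rw [← C_mul_X_pow_eq_monomial, mul_comp, C_comp, X_pow_comp, mul_comm]
    have e1 : (∑ ℓ : Fin (n+1), (X + C z) ^ (ℓ:ℕ) * C (((X - C z)^b).coeff ℓ.1))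
        = ∑ ℓ ∈ Finset.range (n+1), (X + C z) ^ ℓ * C (((X - C z)^b).coeff ℓ) :=
          Fin.sum_univ_eq_sum_range (fun ℓ : ℕ => (X + C z) ^ ℓ * C (((X - C z)^b).coeff ℓ)) (n+1)
    exact e1.trans (h2.symm.trans h1)
  have hAU : ∀ i b : Fin (n+1), (A' * U') i b =
      if (i:ℕ) < n then C (LmHom m (X^(i:ℕ) * (X - C z)^(b:ℕ))) else X^(b:ℕ) := by
    intro i b
    rw [Matrix.mul_apply]
    by_cases hi : (i:ℕ) < n
    · have h2 : ∀ ℓ : Fin (n+1), A' i ℓ * U' ℓ b =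
          C (m (i.1 + ℓ.1) * ((X - C z)^(b:ℕ)).coeff ℓ.1) := by
        intro ℓ; rw [hA'entry, if_pos hi]
        simp only [hU', Matrix.of_apply, ← C_mul]
      have hC : (∑ ℓ : Fin (n+1), C (m (i.1 + ℓ.1) * ((X - C z)^(b:ℕ)).coeff ℓ.1)) =
          C (∑ ℓ : Fin (n+1), m (i.1 + ℓ.1) * ((X - C z)^(b:ℕ)).coeff ℓ.1) :=
        (_root_.map_sum C _ _).symm
      rw [Finset.sum_congr rfl fun ℓ _ => h2 ℓ, hC,
        sumLm' m z n i.1 b.1 (by omega), if_pos hi]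
    · have h2 : ∀ ℓ : Fin (n+1), A' i ℓ * U' ℓ b =
          (X + C z) ^ (ℓ:ℕ) * C (((X - C z)^(b:ℕ)).coeff ℓ.1) := by
        intro ℓ; rw [hA'entry, if_neg hi]; simp only [hU', Matrix.of_apply]
      rw [Finset.sum_congr rfl fun ℓ _ => h2 ℓ, hcomp b.1 (by omega), if_neg hi]
  have hfinal : T * (A' * U') = Matrix.of fun a b : Fin (n+1) =>
      if (a:ℕ) < n then C (LmHom m ((X - C z)^((a:ℕ)+(b:ℕ)))) else X^(b:ℕ) := by
    refine Matrix.ext fun a b => ?_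
    rw [Matrix.mul_apply]
    by_cases ha : (a:ℕ) < n
    · have hterm : ∀ i : Fin (n+1), T a i * (A' * U') i b =
          C (((X - C z)^(a:ℕ)).coeff i.1 * LmHom m (X^(i:ℕ) * (X - C z)^(b:ℕ))) := by
        intro i
        rw [hAU]
        by_cases hi : (i:ℕ) < n
        · rw [if_pos hi]
          simp only [hT, Matrix.of_apply, if_pos ha, ← C_mul]
        · have hc0 : ((X - C z)^(a:ℕ)).coeff i.1 = 0 :=
            coeff_XsubC_pow_zero z _ _ (by omega)
          rw [if_neg hi]
          simp only [hT, Matrix.of_apply, if_pos ha, hc0, map_zero, zero_mul]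
      have hC : (∑ i : Fin (n+1),
          C (((X - C z)^(a:ℕ)).coeff i.1 * LmHom m (X^(i:ℕ) * (X - C z)^(b:ℕ)))) =
          C (∑ i : Fin (n+1),
            ((X - C z)^(a:ℕ)).coeff i.1 * LmHom m (X^(i:ℕ) * (X - C z)^(b:ℕ))) :=
        (_root_.map_sum C _ _).symm
      rw [Finset.sum_congr rfl fun i _ => hterm i, hC,
        sumLm m z n a.1 b.1 (by omega) (by omega)]
      simp [ha]
    · have hterm : ∀ i : Fin (n+1), T a i * (A' * U') i b =
          if i = a then (A' * U') i b else 0 := by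
        intro i
        simp only [hT, Matrix.of_apply, if_neg ha]
        split <;> simp
      rw [Finset.sum_congr rfl fun i _ => hterm i, Finset.sum_ite_eq' Finset.univ a,
        if_pos (Finset.mem_univ a), hAU, if_neg ha]
      simp [ha]
  have hdetsplit : A'.det = (T * (A' * U')).det := by
    rw [Matrix.det_mul, Matrix.det_mul, hdetT, hdetU', one_mul, mul_one]
  rw [htay, hDet, hdetsplit, hfinal]
  rfl

lemma hankelDet_zero (m : ℕ → ℝ) : hankelDet m 0 = m 0 := by
  rw [hankelDet, Matrix.det_fin_one]; rfl

lemma eval_iterate_deriv (g : Polynomial ℝ) (z : ℝ) (i : ℕ) :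
    Polynomial.eval z (Polynomial.derivative^[i] g) =
      (i.factorial : ℝ) * (Polynomial.taylor z g).coeff i := by
  have h := congrFun (Polynomial.factorial_smul_hasseDeriv (R := ℝ) (k := i)) g
  rw [← h]
  simp only [LinearMap.smul_apply, taylor_coeff]
  rw [nsmul_eq_mul, eval_mul]
  simp

lemma lemC (μ : ℕ → ℝ) (n : ℕ) :
    hankelDet μ n * (Matrix.of fun i j : Fin n => (DPoly μ (j.1+1)).coeff i.1).det
      = (-1)^n * μ n * ∏ j : Fin n, hankelDet μ (j.1+1) := by
  classical
  set M' : Matrix (Fin (n+1)) (Fin (n+1)) ℝ :=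
    Matrix.of fun i j : Fin (n+1) => (DPoly μ j.1).coeff i.1 with hM'
  set e : Fin (n+1) → ℝ := fun i => if i = Fin.last n then 1 else 0 with he
  set N := M'.updateCol 0 e with hN
  set dM : ℝ := (Matrix.of fun i j : Fin n => (DPoly μ (j.1+1)).coeff i.1).det with hdM
  have hNcol : ∀ i : Fin (n+1), N i 0 = e i := by
    intro i; rw [hN, Matrix.updateCol_apply, if_pos rfl]
  have hNother : ∀ (i j : Fin (n+1)), j ≠ 0 → N i j = M' i j := by
    intro i j hj; rw [hN, Matrix.updateCol_apply, if_neg hj]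
  have hdetN : N.det = (-1)^n * dM := by
    rw [Matrix.det_succ_column_zero]
    rw [Finset.sum_eq_single (Fin.last n)]
    · have hsub : N.submatrix (Fin.last n).succAbove Fin.succ =
          Matrix.of fun i j : Fin n => (DPoly μ (j.1+1)).coeff i.1 := by
        ext i j
        rw [Matrix.submatrix_apply, Fin.succAbove_last, hNother _ _ (Fin.succ_ne_zero j)]
        simp [hM']
      rw [hsub, hNcol, he]
      simp [Fin.val_last, hdM]
    · intro i _ hi
      rw [hNcol, he]
      simp [hi]
    · intro h; exact absurd (Finset.mem_univ _) h
  have horth : ∀ (i j : Fin (n+1)),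
      (∑ ℓ : Fin (n+1), μ (i.1+ℓ.1) * (DPoly μ j.1).coeff ℓ.1) =
        LmHom μ (X^(i.1) * DPoly μ j.1) :=
    fun i j =>
      calc (∑ ℓ : Fin (n+1), μ (i.1+ℓ.1) * (DPoly μ j.1).coeff ℓ.1)
          = ∑ ℓ : Fin (n+1), (DPoly μ j.1).coeff ℓ.1 * μ (i.1+ℓ.1) :=
            Finset.sum_congr rfl fun ℓ _ => mul_comm _ _
        _ = ∑ ℓ ∈ Finset.range (n+1), (DPoly μ j.1).coeff ℓ * μ (i.1+ℓ) :=
            Fin.sum_univ_eq_sum_range (fun ℓ => (DPoly μ j.1).coeff ℓ * μ (i.1+ℓ)) (n+1)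
        _ = LmHom μ (X^(i.1) * DPoly μ j.1) :=
            (Lm_shift μ i.1 _ n (le_trans (DPoly_natDegree_le μ j.1) (by omega))).symm
  set Hm : Matrix (Fin (n+1)) (Fin (n+1)) ℝ :=
    Matrix.of fun i j : Fin (n+1) => μ (i.1+j.1) with hHm
  have hHN : ∀ i j : Fin (n+1), (Hm * N) i j =
      if j = 0 then μ (i.1 + n) else LmHom μ (X^(i.1) * DPoly μ j.1) := by
    intro i j
    rw [Matrix.mul_apply]
    by_cases hj : j = 0
    · subst hj
      rw [if_pos rfl, Finset.sum_eq_single (Fin.last n)]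
      · rw [hNcol, he]; simp [Fin.val_last, hHm]
      · intro ℓ _ hℓ; rw [hNcol, he]; simp [hℓ]
      · intro h; exact absurd (Finset.mem_univ _) h
    · rw [if_neg hj, ← horth i j]
      exact Finset.sum_congr rfl fun ℓ _ => by rw [hNother _ _ hj]; rfl
  have hdetK : (Hm * N).det = μ n * ∏ j : Fin n, hankelDet μ (j.1+1) := by
    rw [Matrix.det_succ_row_zero]
    rw [Finset.sum_eq_single (0 : Fin (n+1))]
    · have hsub : ((Hm * N).submatrix Fin.succ (0 : Fin (n+1)).succAbove).det =
          ∏ j : Fin n, hankelDet μ (j.1+1) := by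
        have hentry : ∀ i j : Fin n, ((Hm * N).submatrix Fin.succ (0 : Fin (n+1)).succAbove) i j
            = LmHom μ (X^(i.1+1) * DPoly μ (j.1+1)) := by
          intro i j
          rw [Matrix.submatrix_apply, Fin.succAbove_zero, hHN, if_neg (Fin.succ_ne_zero j)]
          rfl
        rw [Matrix.det_of_lowerTriangular]
        · refine Finset.prod_congr rfl fun j _ => ?_
          rw [hentry, orth_self]
        · intro i j hij
          have hij' : (i:ℕ) < (j:ℕ) := by simpa using hij
          rw [hentry, orth_lt _ _ _ (by omega)]
      rw [hHN, if_pos rfl, hsub]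
      simp
    · intro j _ hj
      rw [hHN, if_neg hj, orth_lt _ _ _
        (by have h0 : ((0 : Fin (n+1)) : ℕ) = 0 := rfl
            have hj' : (j:ℕ) ≠ 0 := fun hc => hj (Fin.ext hc); omega)]
      ring
    · intro h; exact absurd (Finset.mem_univ _) h
  have hcomb : hankelDet μ n * ((-1)^n * dM) = μ n * ∏ j : Fin n, hankelDet μ (j.1+1) := by
    have h1 : Hm.det * N.det = (Hm * N).det := (Matrix.det_mul _ _).symm
    rw [hdetN] at h1
    have h2 : Hm.det = hankelDet μ n := rfl
    rw [h2] at h1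
    rw [h1, hdetK]
  have hsq : ((-1:ℝ)^n) * ((-1:ℝ)^n) = 1 := by
    rw [← pow_add]; exact Even.neg_one_pow ⟨n, rfl⟩
  calc hankelDet μ n * dM = ((-1:ℝ)^n * (-1:ℝ)^n) * (hankelDet μ n * dM) := by
        rw [hsq, one_mul]
    _ = (-1:ℝ)^n * (hankelDet μ n * ((-1)^n * dM)) := by ring
    _ = (-1:ℝ)^n * (μ n * ∏ j : Fin n, hankelDet μ (j.1+1)) := by rw [hcomb]
    _ = (-1)^n * μ n * ∏ j : Fin n, hankelDet μ (j.1+1) := by ring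

lemma scalarS (m : ℕ → ℝ) (hD : ∀ k, 0 < hankelDet m k) (n : ℕ) :
    Real.sqrt (m 0 * hankelDet m n) *
      ((∏ j : Fin n, (Real.sqrt (hankelDet m j.1 * hankelDet m (j.1+1)))⁻¹) *
       (∏ j : Fin n, hankelDet m (j.1+1))) = hankelDet m n := by
  set s : ℕ → ℝ := fun k => Real.sqrt (hankelDet m k) with hs
  have hspos : ∀ k, 0 < s k := fun k => Real.sqrt_pos.mpr (hD k)
  have hsq : ∀ k, s k * s k = hankelDet m k := fun k => Real.mul_self_sqrt (hD k).le
  have hmul : ∀ j : ℕ, Real.sqrt (hankelDet m j * hankelDet m (j+1)) = s j * s (j+1) :=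
    fun j => Real.sqrt_mul (hD j).le _
  have hm0 : Real.sqrt (m 0 * hankelDet m n) = s 0 * s n := by
    rw [← hankelDet_zero m]
    exact Real.sqrt_mul (hD 0).le _
  have hP1 : (∏ j : Fin n, (Real.sqrt (hankelDet m j.1 * hankelDet m (j.1+1)))⁻¹)
      = ((∏ j ∈ Finset.range n, s j) * (∏ j ∈ Finset.range n, s (j+1)))⁻¹ := by
    rw [← Finset.prod_mul_distrib, ← Finset.prod_inv_distrib]
    rw [← Fin.prod_univ_eq_prod_range (fun j => (s j * s (j+1))⁻¹) n]
    exact Finset.prod_congr rfl fun j _ => by rw [hmul]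
  have hP2 : (∏ j : Fin n, hankelDet m (j.1+1))
      = (∏ j ∈ Finset.range n, s (j+1)) * (∏ j ∈ Finset.range n, s (j+1)) := by
    rw [← Finset.prod_mul_distrib]
    rw [← Fin.prod_univ_eq_prod_range (fun j => s (j+1) * s (j+1)) n]
    exact Finset.prod_congr rfl fun j _ => (hsq _).symm
  set A := ∏ j ∈ Finset.range n, s j with hA
  set B := ∏ j ∈ Finset.range n, s (j+1) with hB
  have hApos : 0 < A := Finset.prod_pos fun j _ => hspos j
  have hBpos : 0 < B := Finset.prod_pos fun j _ => hspos _
  have htel : B * s 0 = A * s n := by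
    rw [hA, hB, ← Finset.prod_range_succ', Finset.prod_range_succ]
  rw [hm0, hP1, hP2, ← hsq n]
  field_simp
  linear_combination (s n) * htel

lemma Lm_binom (m : ℕ → ℝ) (z : ℝ) (n : ℕ) :
    LmHom m ((X - C z)^n) =
      ∑ j ∈ Finset.range (n+1), (n.choose j : ℝ) * m j * (-z)^(n-j) := by
  have hxz : ((X - C z : Polynomial ℝ))^n =
      ∑ k ∈ Finset.range (n+1), monomial k ((-z)^(n-k) * (n.choose k : ℝ)) := by
    rw [sub_eq_add_neg, ← C_neg, add_pow]
    refine Finset.sum_congr rfl fun k _ => ?_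
    rw [← C_pow, ← Polynomial.C_eq_natCast, mul_assoc, ← C_mul, mul_comm (X^k),
      C_mul_X_pow_eq_monomial]
  rw [hxz, map_sum]
  refine Finset.sum_congr rfl fun k _ => ?_
  rw [Lm_monomial]; ring

/-- For a moment sequence with all Hankel determinants positive,
corresponding measure `μ`, and orthonormal polynomials
`p_n = (D_{n-1} D_n)^{-1/2} D_n(x)` (with `D_{-1} = 1`), one has
`(−1)^n q_n(z) = (√(m₀ D_n) / C_n) · W(p_1, …, p_n; z)` for every `n ≥ 1`. -/
theorem statement11
    (m : ℕ → ℝ)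
    (hD : ∀ n, 0 < hankelDet m n)
    (μ : Measure ℝ)
    (hint : ∀ j : ℕ, Integrable (fun t : ℝ => t ^ j) μ)
    (hmom : ∀ j : ℕ, ∫ t : ℝ, t ^ j ∂μ = m j)
    (p : ℕ → Polynomial ℝ)
    (hp0 : p 0 = Polynomial.C ((Real.sqrt (1 * hankelDet m 0))⁻¹) * DPoly m 0)
    (hp : ∀ n : ℕ, 1 ≤ n →
      p n = Polynomial.C ((Real.sqrt (hankelDet m (n - 1) * hankelDet m n))⁻¹) * DPoly m n) :
    ∀ n : ℕ, 1 ≤ n →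
      (-1 : Polynomial ℝ) ^ n * qPoly m n =
        Polynomial.C (Real.sqrt (m 0 * hankelDet m n) / bigC n) *
          polyWronskianR (fun j : Fin n => p (j.1 + 1)) := by
  intro n hn
  apply Polynomial.funext
  intro z
  set ν : ℕ → ℝ := fun j => LmHom m ((X - C z)^j) with hν
  have hHz : ∀ k, hankelDet ν k = hankelDet m k := fun k => shiftHankel m z k
  have hDn_ne : hankelDet m n ≠ 0 := ne_of_gt (hD n)
  -- LHS evaluation
  have hq : Polynomial.eval z ((-1 : Polynomial ℝ)^n * qPoly m n) = (-1)^n * ν n := by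
    rw [eval_mul, eval_pow, eval_neg, eval_one]
    congr 1
    show Polynomial.eval z (qPoly m n) = LmHom m ((X - C z)^n)
    rw [Lm_binom, qPoly, eval_finset_sum]
    refine Finset.sum_congr rfl fun j _ => ?_
    simp only [eval_mul, eval_C, eval_pow, eval_neg, eval_X]
  -- normalizing constants
  set c : Fin n → ℝ := fun j =>
    (Real.sqrt (hankelDet m j.1 * hankelDet m (j.1+1)))⁻¹ with hc
  have hpj : ∀ j : Fin n, p (j.1+1) = Polynomial.C (c j) * DPoly m (j.1+1) :=
    fun j => hp (j.1+1) (by omega)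
  set M'' : Matrix (Fin n) (Fin n) ℝ :=
    Matrix.of fun i j : Fin n => (DPoly ν (j.1+1)).coeff i.1 with hM''
  -- Wronskian evaluation
  have hW : Polynomial.eval z (polyWronskianR (fun j : Fin n => p (j.1 + 1))) =
      (∏ i : Fin n, (i.1.factorial : ℝ)) * ((∏ j : Fin n, c j) * M''.det) := by
    rw [polyWronskianR]
    have h1 : Polynomial.eval z ((Matrix.of fun i j : Fin n =>
        Polynomial.derivative^[i.1] (p (j.1+1))).det) =
        ((Polynomial.evalRingHom z).mapMatrix (Matrix.of fun i j : Fin n =>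
          Polynomial.derivative^[i.1] (p (j.1+1)))).det :=
      RingHom.map_det (Polynomial.evalRingHom z) _
    have hentry : ∀ i j : Fin n,
        Polynomial.eval z (Polynomial.derivative^[i.1] (p (j.1+1)))
        = (i.1.factorial : ℝ) * (c j * M'' i j) := by
      intro i j
      rw [hpj j, Polynomial.iterate_derivative_C_mul, eval_mul, eval_C,
        eval_iterate_deriv, ← shiftDPoly m z (j.1+1)]
      show c j * ((i.1.factorial : ℝ) * (DPoly ν (j.1+1)).coeff i.1) = _
      rw [hM'']
      simp only [Matrix.of_apply]
      ring
    have h2 : ((Polynomial.evalRingHom z).mapMatrix (Matrix.of fun i j : Fin n =>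
        Polynomial.derivative^[i.1] (p (j.1+1)))) =
        Matrix.of fun i j : Fin n => (i.1.factorial : ℝ) *
          ((Matrix.of fun i' j' : Fin n => c j' * M'' i' j') i j) := by
      refine Matrix.ext fun i j => ?_
      simp only [RingHom.mapMatrix_apply, Matrix.map_apply, Matrix.of_apply]
      exact hentry i j
    rw [h1, h2, Matrix.det_mul_column]
    congr 1
    exact Matrix.det_mul_row (fun j => c j) M''
  -- product of factorials is bigC
  have hprodfac : (∏ i : Fin n, (i.1.factorial : ℝ)) = bigC n :=
    Fin.prod_univ_eq_prod_range (fun k => (k.factorial : ℝ)) n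
  -- determinant identity
  set P : ℝ := ∏ j : Fin n, hankelDet m (j.1+1) with hP
  have hlemC : hankelDet m n * M''.det = (-1)^n * ν n * P := by
    have h := lemC ν n
    rw [hHz n] at h
    rw [hM'', h, hP]
    congr 1
    exact Finset.prod_congr rfl fun j _ => hHz _
  have hS : Real.sqrt (m 0 * hankelDet m n) * ((∏ j : Fin n, c j) * P) = hankelDet m n :=
    scalarS m hD n
  -- put it together
  rw [hq, eval_mul, eval_C, hW, hprodfac]
  have hB_ne : bigC n ≠ 0 := by
    rw [bigC]
    exact ne_of_gt (Finset.prod_pos fun k _ => by positivity)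
  have hstep : Real.sqrt (m 0 * hankelDet m n) / bigC n *
      (bigC n * ((∏ j : Fin n, c j) * M''.det)) =
      Real.sqrt (m 0 * hankelDet m n) * ((∏ j : Fin n, c j) * M''.det) := by
    field_simp
  rw [hstep]
  refine mul_left_cancel₀ hDn_ne ?_
  linear_combination (-(Real.sqrt (m 0 * hankelDet m n) * ∏ j : Fin n, c j)) * hlemC +
    (-((-1:ℝ)^n * ν n)) * hS
end
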